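/- Let K_{r,s} be the complete bipartite graph with parts A and B of sizes r ≥ 1 and s ≥ 1, and let c be a proper coloring of K_{r,s} using exactly two colors. Then the minimum cardinality of an up-color dominating c-set of K_{r,s} equals the number of vertices in the part that receives the larger of the two colors; in particular it lies in {r, s}. -/
import Mathlib


/-- `D` is an up-color dominating `c`-set of `G`. -/
def IsUCDomSet {V : Type*} (G : SimpleGraph V) (c : V → ℕ) (D : Finset V) : Prop :=
  (∀ v ∉ D, ∃ d ∈ D, G.Adj v d ∧ c v < c d) ∧ ∀ d ∈ D, 1 ≤ c d

/-- In a proper two-coloring of `K_{r,s}` each part is monochromatic; the minimum size of an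
up-color dominating `c`-set equals the size of the part receiving the larger color. -/
theorem stmt_11 (r s : ℕ) (hr : 1 ≤ r) (hs : 1 ≤ s)
    (c : Fin r ⊕ Fin s → ℕ)
    (hc : ∀ ⦃u v⦄, (completeBipartiteGraph (Fin r) (Fin s)).Adj u v → c u ≠ c v)
    (h2 : (Finset.univ.image c).card = 2) :
    (∃ D : Finset (Fin r ⊕ Fin s),
        IsUCDomSet (completeBipartiteGraph (Fin r) (Fin s)) c D ∧
          D.card = if c (Sum.inl ⟨0, hr⟩) < c (Sum.inr ⟨0, hs⟩) then s else r) ∧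
      (∀ D : Finset (Fin r ⊕ Fin s),
        IsUCDomSet (completeBipartiteGraph (Fin r) (Fin s)) c D →
          (if c (Sum.inl ⟨0, hr⟩) < c (Sum.inr ⟨0, hs⟩) then s else r) ≤ D.card) := by
  set a := c (Sum.inl ⟨0, hr⟩) with ha
  set b := c (Sum.inr ⟨0, hs⟩) with hb
  have hadj : ∀ (i : Fin r) (j : Fin s),
      (completeBipartiteGraph (Fin r) (Fin s)).Adj (Sum.inl i) (Sum.inr j) := by
    intro i j; simp
  have hab : a ≠ b := hc (hadj _ _)
  have himg : Finset.univ.image c = {a, b} := by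
    refine (Finset.eq_of_subset_of_card_le ?_ ?_).symm
    · intro x hx
      simp only [Finset.mem_insert, Finset.mem_singleton] at hx
      rcases hx with rfl | rfl
      · exact Finset.mem_image.mpr ⟨_, Finset.mem_univ _, ha.symm⟩
      · exact Finset.mem_image.mpr ⟨_, Finset.mem_univ _, hb.symm⟩
    · rw [h2]
      rw [Finset.card_insert_of_notMem (by simpa using hab), Finset.card_singleton]
  have hA : ∀ i : Fin r, c (Sum.inl i) = a := by
    intro i
    have hmem : c (Sum.inl i) ∈ ({a, b} : Finset ℕ) := by
      rw [← himg]; exact Finset.mem_image.mpr ⟨_, Finset.mem_univ _, rfl⟩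
    have hne : c (Sum.inl i) ≠ b := hc (hadj i ⟨0, hs⟩)
    simp only [Finset.mem_insert, Finset.mem_singleton] at hmem
    tauto
  have hB : ∀ j : Fin s, c (Sum.inr j) = b := by
    intro j
    have hmem : c (Sum.inr j) ∈ ({a, b} : Finset ℕ) := by
      rw [← himg]; exact Finset.mem_image.mpr ⟨_, Finset.mem_univ _, rfl⟩
    have hne : c (Sum.inr j) ≠ a := (hc ((hadj ⟨0, hr⟩ j).symm) : _)
    simp only [Finset.mem_insert, Finset.mem_singleton] at hmem
    tauto
  rcases lt_or_gt_of_ne hab with hlt | hgt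
  · rw [if_pos hlt]
    constructor
    · refine ⟨Finset.univ.image Sum.inr, ⟨⟨?_, ?_⟩, ?_⟩⟩
      · intro v hv
        obtain (⟨i⟩ | ⟨j⟩) := v
        · exact ⟨Sum.inr ⟨0, hs⟩, Finset.mem_image.mpr ⟨_, Finset.mem_univ _, rfl⟩,
            hadj i ⟨0, hs⟩, by rw [hA i, ← hb]; exact hlt⟩
        · exact absurd (Finset.mem_image.mpr ⟨_, Finset.mem_univ _, rfl⟩) hv
      · intro d hd
        rcases Finset.mem_image.mp hd with ⟨j, _, rfl⟩
        rw [hB j]; omega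
      · rw [Finset.card_image_of_injective _ Sum.inr_injective, Finset.card_univ,
          Fintype.card_fin]
    · intro D hD
      have hsub : Finset.univ.image Sum.inr ⊆ D := by
        intro x hx
        rcases Finset.mem_image.mp hx with ⟨j, _, rfl⟩
        by_contra hnot
        obtain ⟨d, hdD, hadj', hlt'⟩ := hD.1 _ hnot
        obtain (⟨i⟩ | ⟨j'⟩) := d
        · rw [hB j, hA i] at hlt'; omega
        · simp [completeBipartiteGraph] at hadj'
      calc s = (Finset.univ.image Sum.inr : Finset (Fin r ⊕ Fin s)).card := by
              rw [Finset.card_image_of_injective _ Sum.inr_injective, Finset.card_univ,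
                Fintype.card_fin]
        _ ≤ D.card := Finset.card_le_card hsub
  · rw [if_neg (by omega)]
    constructor
    · refine ⟨Finset.univ.image Sum.inl, ⟨⟨?_, ?_⟩, ?_⟩⟩
      · intro v hv
        obtain (⟨i⟩ | ⟨j⟩) := v
        · exact absurd (Finset.mem_image.mpr ⟨_, Finset.mem_univ _, rfl⟩) hv
        · exact ⟨Sum.inl ⟨0, hr⟩, Finset.mem_image.mpr ⟨_, Finset.mem_univ _, rfl⟩,
            (hadj ⟨0, hr⟩ j).symm, by rw [hB j, ← ha]; exact hgt⟩
      · intro d hd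
        rcases Finset.mem_image.mp hd with ⟨i, _, rfl⟩
        rw [hA i]; omega
      · rw [Finset.card_image_of_injective _ Sum.inl_injective, Finset.card_univ,
          Fintype.card_fin]
    · intro D hD
      have hsub : Finset.univ.image Sum.inl ⊆ D := by
        intro x hx
        rcases Finset.mem_image.mp hx with ⟨i, _, rfl⟩
        by_contra hnot
        obtain ⟨d, hdD, hadj', hlt'⟩ := hD.1 _ hnot
        obtain (⟨i'⟩ | ⟨j⟩) := d
        · simp [completeBipartiteGraph] at hadj'
        · rw [hA i, hB j] at hlt'; omega
      calc r = (Finset.univ.image Sum.inl : Finset (Fin r ⊕ Fin s)).card := by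
              rw [Finset.card_image_of_injective _ Sum.inl_injective, Finset.card_univ,
                Fintype.card_fin]
        _ ≤ D.card := Finset.card_le_card hsub
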